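/- arXiv:2602.16910 — 3 statements merged into one kernel-verified Lean document; each statement's English description precedes it below -/
import Mathlib

section
/- For any k ≥ 2, the number of triples of 'break positions' on a cycle of length 2k such that all three pairwise circular distances between consecutive breaks (going around the cycle) are at most k-1 equals 2·C(k,3). -/
/-- Three-element break sets on the cycle `Z/2k` all of whose three circular intervals
(between consecutive breaks, going around the cycle) have length at most `k - 1`. -/
def threeClawBreaks (k : ℕ) : Finset (Finset (Fin (2 * k))) :=
  Finset.univ.filter fun s =>
    ∃ a b c : Fin (2 * k), a.1 < b.1 ∧ b.1 < c.1 ∧ s = {a, b, c} ∧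
      b.1 - a.1 ≤ k - 1 ∧ c.1 - b.1 ≤ k - 1 ∧ 2 * k - c.1 + a.1 ≤ k - 1

private lemma two_choose_two (n : ℕ) : 2 * Nat.choose (n + 2) 2 = (n + 2) * (n + 1) := by
  rw [Nat.choose_two_right]
  rw [show n + 2 - 1 = n + 1 from rfl, Nat.mul_div_cancel' (by simpa [mul_comm] using (Nat.even_mul_succ_self (n + 1)).two_dvd : 2 ∣ (n + 2) * (n + 1))]

private lemma sum_tt (n : ℕ) : ∑ t ∈ Finset.Icc 1 n, t * (t + 1) = 2 * Nat.choose (n + 2) 3 := by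
  induction n with
  | zero => simp
  | succ n ih =>
    rw [Finset.sum_Icc_succ_top (by omega), ih]
    have h1 : Nat.choose (n + 1 + 2) 3 = Nat.choose (n + 2) 3 + Nat.choose (n + 2) 2 := by
      rw [show n + 1 + 2 = (n + 2) + 1 by ring, Nat.choose_succ_succ' (n+2) 2]; ring_nf
    have h2 := two_choose_two n
    have h3 : (n + 1) * (n + 1 + 1) = (n + 2) * (n + 1) := by ring
    omega

private lemma triple_eq {n : ℕ} {a b c a' b' c' : Fin n}
    (hab : a.1 < b.1) (hbc : b.1 < c.1) (hab' : a'.1 < b'.1) (hbc' : b'.1 < c'.1)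
    (h : ({a, b, c} : Finset (Fin n)) = {a', b', c'}) :
    a.1 = a'.1 ∧ b.1 = b'.1 ∧ c.1 = c'.1 := by
  have ha : a ∈ ({a', b', c'} : Finset (Fin n)) := h ▸ (by simp)
  have hb : b ∈ ({a', b', c'} : Finset (Fin n)) := h ▸ (by simp)
  have hc : c ∈ ({a', b', c'} : Finset (Fin n)) := h ▸ (by simp)
  have ha' : a' ∈ ({a, b, c} : Finset (Fin n)) := h ▸ (by simp)
  simp only [Finset.mem_insert, Finset.mem_singleton, Fin.ext_iff] at ha hb hc ha'
  omega

/-- The set of strictly increasing break triples, as natural numbers. -/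
private def T (k : ℕ) : Finset ((ℕ × ℕ) × ℕ) :=
  ((Finset.range (2*k) ×ˢ Finset.range (2*k)) ×ˢ Finset.range (2*k)).filter
    fun p => p.1.1 < p.1.2 ∧ p.1.2 < p.2 ∧ p.1.2 - p.1.1 ≤ k - 1 ∧ p.2 - p.1.2 ≤ k - 1 ∧
      2*k - p.2 + p.1.1 ≤ k - 1

private def V (k : ℕ) : Finset ((_ : ℕ) × ℕ × ℕ) :=
  (Finset.Icc 1 (k-2)).sigma fun t => Finset.Icc (k-t) (k-1) ×ˢ Finset.range (t+1)

private lemma T_card_eq_V (k : ℕ) (hk : 2 ≤ k) : (T k).card = (V k).card := by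
  apply Finset.card_nbij' (i := fun p => ⟨2*k - 1 - p.2 + p.1.1, (p.1.2 - p.1.1, p.1.1)⟩)
    (j := fun q => ((q.2.2, q.2.2 + q.2.1), q.2.2 + (2*k - 1 - q.1)))
  · intro p hp
    obtain ⟨⟨a, b⟩, c⟩ := p
    simp only [T, Finset.mem_coe, Finset.mem_filter, Finset.mem_product, Finset.mem_range] at hp
    simp only [V, Finset.mem_coe, Finset.mem_sigma, Finset.mem_product, Finset.mem_Icc, Finset.mem_range]
    omega
  · intro q hq
    obtain ⟨t, x, a⟩ := q
    simp only [V, Finset.mem_coe, Finset.mem_sigma, Finset.mem_product, Finset.mem_Icc, Finset.mem_range] at hq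
    simp only [T, Finset.mem_coe, Finset.mem_filter, Finset.mem_product, Finset.mem_range]
    omega
  · intro p hp
    obtain ⟨⟨a, b⟩, c⟩ := p
    simp only [T, Finset.mem_coe, Finset.mem_filter, Finset.mem_product, Finset.mem_range] at hp
    simp only [Prod.mk.injEq, true_and, and_true, eq_self_iff_true]
    omega
  · intro q hq
    obtain ⟨t, x, a⟩ := q
    simp only [V, Finset.mem_coe, Finset.mem_sigma, Finset.mem_product, Finset.mem_Icc, Finset.mem_range] at hq
    simp only [Sigma.ext_iff, heq_eq_eq, Prod.ext_iff, true_and, and_true, eq_self_iff_true]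
    omega

private lemma V_card (k : ℕ) (hk : 2 ≤ k) : (V k).card = 2 * Nat.choose k 3 := by
  rw [V, Finset.card_sigma]
  have : ∀ t ∈ Finset.Icc 1 (k-2),
      (Finset.Icc (k-t) (k-1) ×ˢ Finset.range (t+1)).card = t * (t+1) := by
    intro t ht
    simp only [Finset.mem_Icc] at ht
    rw [Finset.card_product, Nat.card_Icc, Finset.card_range]
    congr 1
    omega
  rw [Finset.sum_congr rfl this, sum_tt]
  congr 2
  omega


/-- The number of triples of break positions on a cycle of length `2k` whose three
pairwise circular distances between consecutive breaks are all at most `k - 1`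
equals `2·C(k,3)`. -/
theorem threeClawBreaks_card (k : ℕ) (hk : 2 ≤ k) :
    (threeClawBreaks k).card = 2 * Nat.choose k 3 := by
  rw [← V_card k hk, ← T_card_eq_V k hk]
  symm
  apply Finset.card_bij (i := fun p hp =>
    ({⟨p.1.1, by simp only [T, Finset.mem_filter, Finset.mem_product, Finset.mem_range] at hp; omega⟩,
      ⟨p.1.2, by simp only [T, Finset.mem_filter, Finset.mem_product, Finset.mem_range] at hp; omega⟩,
      ⟨p.2, by simp only [T, Finset.mem_filter, Finset.mem_product, Finset.mem_range] at hp; omega⟩} :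
      Finset (Fin (2*k))))
  · intro p hp
    have hp' := hp
    simp only [T, Finset.mem_filter, Finset.mem_product, Finset.mem_range] at hp'
    simp only [threeClawBreaks, Finset.mem_filter, Finset.mem_univ, true_and]
    exact ⟨⟨p.1.1, by omega⟩, ⟨p.1.2, by omega⟩, ⟨p.2, by omega⟩,
      by simpa using hp'.2.1, by simpa using hp'.2.2.1, rfl,
      by simpa using hp'.2.2.2.1, by simpa using hp'.2.2.2.2.1, by simpa using hp'.2.2.2.2.2⟩
  · intro p1 h1 p2 h2 heq
    simp only [T, Finset.mem_filter, Finset.mem_product, Finset.mem_range] at h1 h2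
    have := triple_eq (by simpa using h1.2.1) (by simpa using h1.2.2.1)
      (by simpa using h2.2.1) (by simpa using h2.2.2.1) heq
    simp only [Fin.val_mk] at this
    simp only [Prod.ext_iff, true_and, and_true, eq_self_iff_true]
    omega
  · intro s hs
    simp only [threeClawBreaks, Finset.mem_filter, Finset.mem_univ, true_and] at hs
    obtain ⟨a, b, c, hab, hbc, hs, h1, h2, h3⟩ := hs
    refine ⟨((a.1, b.1), c.1), ?_, ?_⟩
    · simp only [T, Finset.mem_filter, Finset.mem_product, Finset.mem_range]
      exact ⟨⟨⟨a.isLt, b.isLt⟩, c.isLt⟩, hab, hbc, h1, h2, h3⟩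
    · rw [hs]
end

section
/- Let T be a standard Young tableau of shape (2,...,2) with k rows such that b_i = 2i for some i ∈ [k-1], where b_1 < ... < b_k are the second-column entries. Then in the associated noncrossing matching M_T, vertex 1 is matched with some vertex in {2, 3, ..., 2i}; in particular {1, 2k} is not an edge of M_T. -/
/-- A standard Young tableau of two-column rectangular shape `(2,…,2)` with `k` rows:
a bijective filling of the `k × 2` grid by the values `1, …, 2k` that increases along
rows (left to right) and down columns. -/
structure SYT2 (k : ℕ) where
  entry : Fin k × Fin 2 → ℕ
  mem_Icc : ∀ x, entry x ∈ Finset.Icc 1 (2 * k)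
  inj : Function.Injective entry
  row_lt : ∀ r : Fin k, entry (r, 0) < entry (r, 1)
  col_lt : ∀ (r r' : Fin k) (c : Fin 2), r < r' → entry (r, c) < entry (r', c)

/-- The set of first-column entries of `T`. -/
def col1 {k : ℕ} (T : SYT2 k) : Finset ℕ :=
  Finset.univ.image fun r : Fin k => T.entry (r, 0)

/-- The set of second-column entries of `T`. -/
def col2 {k : ℕ} (T : SYT2 k) : Finset ℕ :=
  Finset.univ.image fun r : Fin k => T.entry (r, 1)

/-- `bseq T (i-1)` is `b_i`, the `i`-th smallest second-column entry of `T`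
(the second column increases down the rows). -/
def bseq {k : ℕ} (T : SYT2 k) (i : ℕ) : ℕ :=
  if h : i < k then T.entry (⟨i, h⟩, 1) else 0

/-- Greedy matching list: processing `b 0, b 1, …` in order, each `b i` is matched with
the largest entry of `c` smaller than `b i` that has not yet been used; `greedyList c b i`
is the list of the first `i` chosen partners. -/
def greedyList (c : Finset ℕ) (b : ℕ → ℕ) : ℕ → List ℕ
  | 0 => []
  | i + 1 =>
    let prev := greedyList c b i
    prev ++ [(c.filter fun a => a < b i ∧ a ∉ prev).sup id]

/-- The partner chosen for `b i` by the greedy matching procedure. -/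
def greedyPartner (c : Finset ℕ) (b : ℕ → ℕ) (i : ℕ) : ℕ :=
  (greedyList c b (i + 1)).getLastD 0

/-- The matching `M_T` associated to a two-column rectangular standard Young tableau `T`:
each second-column entry `b_i`, in increasing order, is matched with the largest
yet-unmatched first-column entry smaller than `b_i`.  Edges are recorded as ordered
pairs `(a, b)` with `a < b`. -/
def MT {k : ℕ} (T : SYT2 k) : Finset (ℕ × ℕ) :=
  (Finset.range k).image fun i => (greedyPartner (col1 T) (bseq T) i, bseq T i)

/-- `M` is a noncrossing perfect matching of `{1, …, 2k}`, with each edge recorded as an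
ordered pair `(a, b)`, `a < b`: every vertex lies in exactly one edge, and there are no
crossing edges `{a, c}`, `{b, d}` with `a < b < c < d`. -/
def IsNCPM (k : ℕ) (M : Finset (ℕ × ℕ)) : Prop :=
  (∀ p ∈ M, p.1 < p.2 ∧ p.1 ∈ Finset.Icc 1 (2 * k) ∧ p.2 ∈ Finset.Icc 1 (2 * k)) ∧
  (∀ v ∈ Finset.Icc 1 (2 * k), ∃! p, p ∈ M ∧ (v = p.1 ∨ v = p.2)) ∧
  (∀ p ∈ M, ∀ q ∈ M, ¬(p.1 < q.1 ∧ q.1 < p.2 ∧ p.2 < q.2))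


section Aux

lemma greedyList_succ (c : Finset ℕ) (b : ℕ → ℕ) (n : ℕ) :
    greedyList c b (n + 1) = greedyList c b n ++ [greedyPartner c b n] := by
  have h : greedyPartner c b n
      = ((c.filter fun a => a < b n ∧ a ∉ greedyList c b n).sup id) := by
    simp [greedyPartner, greedyList, List.getLastD_concat]
  rw [h]; rfl

lemma mem_greedyList_iff (c : Finset ℕ) (b : ℕ → ℕ) (n : ℕ) (x : ℕ) :
    x ∈ greedyList c b n ↔ ∃ j < n, greedyPartner c b j = x := by
  induction n with
  | zero => simp [greedyList]
  | succ n ih =>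
    rw [greedyList_succ]
    simp only [List.mem_append, List.mem_singleton, ih]
    constructor
    · rintro (⟨j, hj, hx⟩ | hx)
      · exact ⟨j, by omega, hx⟩
      · exact ⟨n, by omega, hx.symm⟩
    · rintro ⟨j, hj, hx⟩
      rcases Nat.lt_succ_iff_lt_or_eq.mp hj with h | rfl
      · exact Or.inl ⟨j, h, hx⟩
      · exact Or.inr hx.symm

lemma greedy_inv (c : Finset ℕ) (b : ℕ → ℕ) (N : ℕ)
    (hmono : ∀ j m, j ≤ m → m < N → b j ≤ b m)
    (hcard : ∀ m, m < N → m + 1 ≤ (c.filter (· < b m)).card) :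
    ∀ n, n ≤ N → (greedyList c b n).length = n ∧ (greedyList c b n).Nodup ∧
      (∀ x ∈ greedyList c b n, x ∈ c ∧ ∀ m, n ≤ m + 1 → m < N → x < b m) ∧
      (1 ≤ n → greedyPartner c b (n-1) ∉ greedyList c b (n-1)) := by
  intro n
  induction n with
  | zero => simp [greedyList]
  | succ n ih =>
    intro hn
    obtain ⟨hlen, hnd, hmem, -⟩ := ih (by omega)
    have hnN : n < N := by omega
    -- the filtered set is nonempty
    have hsub : (greedyList c b n).toFinset ⊆ c.filter (· < b n) := by
      intro x hx
      rw [List.mem_toFinset] at hx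
      obtain ⟨hxc, hxb⟩ := hmem x hx
      exact Finset.mem_filter.mpr ⟨hxc, hxb n (by omega) hnN⟩
    have hcard' : (greedyList c b n).toFinset.card = n := by
      rw [List.toFinset_card_of_nodup hnd, hlen]
    have hne : (c.filter fun a => a < b n ∧ a ∉ greedyList c b n).Nonempty := by
      have : (greedyList c b n).toFinset ⊂ c.filter (· < b n) := by
        refine lt_of_le_of_ne hsub ?_
        intro he
        have := hcard n hnN
        rw [← he, hcard'] at this; omega
      obtain ⟨y, hy, hy2⟩ := Finset.exists_of_ssubset this
      refine ⟨y, ?_⟩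
      rw [Finset.mem_filter] at hy ⊢
      exact ⟨hy.1, hy.2, fun h => hy2 (List.mem_toFinset.mpr h)⟩
    obtain ⟨y, hyS, hysup⟩ := Finset.exists_mem_eq_sup _ hne id
    have hgp : greedyPartner c b n
        = (c.filter fun a => a < b n ∧ a ∉ greedyList c b n).sup id := by
      simp [greedyPartner, greedyList, List.getLastD_concat]
    have hgpS : greedyPartner c b n ∈
        (c.filter fun a => a < b n ∧ a ∉ greedyList c b n) := by
      rw [hgp, hysup]; exact hyS
    rw [Finset.mem_filter] at hgpS
    obtain ⟨hgc, hgb, hgnm⟩ := hgpS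
    rw [greedyList_succ]
    refine ⟨by simp [hlen], ?_, ?_, ?_⟩
    · simp only [List.nodup_append, List.nodup_singleton, true_and]
      exact ⟨hnd, by simpa using fun a ha (hab : a = greedyPartner c b n) => hgnm (hab ▸ ha)⟩
    · intro x hx
      rcases List.mem_append.mp hx with h | h
      · obtain ⟨hxc, hxb⟩ := hmem x h
        exact ⟨hxc, fun m hm1 hm2 => hxb m (by omega) hm2⟩
      · rw [List.mem_singleton] at h
        subst h
        refine ⟨hgc, fun m hm1 hm2 => lt_of_lt_of_le hgb (hmono n m (by omega) hm2)⟩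
    · intro _
      simpa using hgnm

end Aux

/-- If `b_i = 2i` for some `i ∈ [k-1]` (encoded by the row index `r = i - 1 : Fin k`),
then in the noncrossing matching `M_T` the vertex `1` is matched with some vertex in
`{2, 3, …, 2i}`; in particular `{1, 2k}` is not an edge of `M_T`. -/
theorem one_matched_low (k : ℕ) (T : SYT2 k) (r : Fin k) (hr : r.1 + 1 < k)
    (hb : T.entry (r, 1) = 2 * (r.1 + 1)) :
    (∃ v, 2 ≤ v ∧ v ≤ 2 * (r.1 + 1) ∧ (1, v) ∈ MT T) ∧ (1, 2 * k) ∉ MT T := by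
  classical
  set c := col1 T with hc
  set b := bseq T with hbdef
  have hk : 0 < k := by omega
  set i := r.1 + 1 with hi
  have hbrow : ∀ m (hm : m < k), b m = T.entry (⟨m, hm⟩, 1) := by
    intro m hm; simp [hbdef, bseq, hm]
  have hbr : b r.1 = 2 * i := by rw [hbrow r.1 r.2]; simpa using hb
  have hent1 : ∀ x, 1 ≤ T.entry x := fun x => (Finset.mem_Icc.mp (T.mem_Icc x)).1
  have hent2 : ∀ x, T.entry x ≤ 2 * k := fun x => (Finset.mem_Icc.mp (T.mem_Icc x)).2
  have hstrict : ∀ j m, j < m → ∀ (hm : m < k), b j < b m := by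
    intro j m hjm hm
    rw [hbrow j (by omega), hbrow m hm]
    exact T.col_lt _ _ _ (by exact Fin.mk_lt_mk.mpr hjm)
  have hmono : ∀ j m, j ≤ m → m < k → b j ≤ b m := by
    intro j m hjm hm
    rcases lt_or_eq_of_le hjm with h | rfl
    · exact le_of_lt (hstrict j m h hm)
    · exact le_rfl
  have hinj0 : Function.Injective fun s : Fin k => T.entry (s, 0) := by
    intro s t h
    have := T.inj h
    exact (Prod.ext_iff.mp this).1
  have hcard : ∀ m, m < k → m + 1 ≤ (c.filter (· < b m)).card := by
    intro m hm
    have hsub : (Finset.Iic (⟨m, hm⟩ : Fin k)).image (fun s => T.entry (s, 0))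
        ⊆ c.filter (· < b m) := by
      intro x hx
      obtain ⟨s, hs, rfl⟩ := Finset.mem_image.mp hx
      rw [Finset.mem_Iic] at hs
      refine Finset.mem_filter.mpr ⟨Finset.mem_image.mpr ⟨s, Finset.mem_univ s, rfl⟩, ?_⟩
      rw [hbrow m hm]
      rcases lt_or_eq_of_le hs with h | rfl
      · exact lt_trans (T.col_lt _ _ _ h) (T.row_lt _)
      · exact T.row_lt _
    calc m + 1 = ((Finset.Iic (⟨m, hm⟩ : Fin k)).image (fun s => T.entry (s, 0))).card := by
          rw [Finset.card_image_of_injective _ hinj0, Fin.card_Iic]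
      _ ≤ _ := Finset.card_le_card hsub
  -- entries in the first i rows are exactly 1..2i
  have hFcard : (((Finset.Iic r) ×ˢ (Finset.univ : Finset (Fin 2))).image T.entry).card
      = 2 * i := by
    rw [Finset.card_image_of_injective _ T.inj, Finset.card_product, Fin.card_Iic,
      Finset.card_univ, Fintype.card_fin]
    omega
  have hFsub : ((Finset.Iic r) ×ˢ (Finset.univ : Finset (Fin 2))).image T.entry
      ⊆ Finset.Icc 1 (2 * i) := by
    intro x hx
    obtain ⟨⟨s, c'⟩, hs, rfl⟩ := Finset.mem_image.mp hx
    rw [Finset.mem_product, Finset.mem_Iic] at hs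
    refine Finset.mem_Icc.mpr ⟨hent1 _, ?_⟩
    have hsr : s ≤ r := hs.1
    have hle : T.entry (s, c') ≤ T.entry (r, c') := by
      rcases lt_or_eq_of_le hsr with h | rfl
      · exact le_of_lt (T.col_lt s r c' h)
      · exact le_rfl
    have hle2 : T.entry (r, c') ≤ 2 * i := by
      rcases c' with ⟨cv, hcv⟩
      interval_cases cv
      · simp only [Fin.mk_zero]
        have h2 := T.row_lt r
        omega
      · simp only [Fin.mk_one]
        omega
    omega
  have hF : ((Finset.Iic r) ×ˢ (Finset.univ : Finset (Fin 2))).image T.entry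
      = Finset.Icc 1 (2 * i) := by
    refine Finset.eq_of_subset_of_card_le hFsub ?_
    rw [hFcard, Nat.card_Icc]
    omega
  have h1F : (1 : ℕ) ∈ ((Finset.Iic r) ×ˢ (Finset.univ : Finset (Fin 2))).image T.entry := by
    rw [hF]; exact Finset.mem_Icc.mpr ⟨le_rfl, by omega⟩
  have h1c : (1 : ℕ) ∈ c := by
    obtain ⟨⟨s, c'⟩, hs, he⟩ := Finset.mem_image.mp h1F
    have hc0 : c' = 0 := by
      by_contra hne
      have hc1 : c' = 1 := by omega
      subst hc1
      have := T.row_lt s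
      have := hent1 (s, 0)
      omega
    subst hc0
    exact Finset.mem_image.mpr ⟨s, Finset.mem_univ s, he⟩
  -- first-column entries below 2i are exactly the first i rows' first column
  have hGcard : ((Finset.Iic r).image (fun s => T.entry (s, 0))).card = i := by
    rw [Finset.card_image_of_injective _ hinj0, Fin.card_Iic]
  have hfilt : c.filter (· < 2 * i) = (Finset.Iic r).image (fun s => T.entry (s, 0)) := by
    apply Finset.Subset.antisymm
    · intro a ha
      obtain ⟨hac, halt⟩ := Finset.mem_filter.mp ha
      obtain ⟨s, -, rfl⟩ := Finset.mem_image.mp hac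
      have haF : T.entry (s, 0) ∈
          ((Finset.Iic r) ×ˢ (Finset.univ : Finset (Fin 2))).image T.entry := by
        rw [hF]
        exact Finset.mem_Icc.mpr ⟨hent1 _, by omega⟩
      obtain ⟨⟨t, c'⟩, ht, he⟩ := Finset.mem_image.mp haF
      have hts : t = s := congrArg (fun p => p.1) (T.inj he)
      rw [Finset.mem_product, Finset.mem_Iic] at ht
      refine Finset.mem_image.mpr ⟨s, Finset.mem_Iic.mpr ?_, rfl⟩
      rw [← hts]; exact ht.1
    · intro a ha
      obtain ⟨s, hs, rfl⟩ := Finset.mem_image.mp ha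
      rw [Finset.mem_Iic] at hs
      refine Finset.mem_filter.mpr ⟨Finset.mem_image.mpr ⟨s, Finset.mem_univ s, rfl⟩, ?_⟩
      have h2 := T.row_lt r
      rcases lt_or_eq_of_le hs with h | rfl
      · have h1 := T.col_lt s r 0 h
        omega
      · omega
  -- the invariant at step i
  obtain ⟨hlen, hnd, hmem, -⟩ := greedy_inv c b k hmono hcard i (by omega)
  have hLsub : (greedyList c b i).toFinset ⊆ c.filter (· < 2 * i) := by
    intro x hx
    rw [List.mem_toFinset] at hx
    obtain ⟨hxc, hxb⟩ := hmem x hx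
    refine Finset.mem_filter.mpr ⟨hxc, ?_⟩
    have := hxb r.1 (by omega) r.2
    omega
  have hLcard : (greedyList c b i).toFinset.card = i := by
    rw [List.toFinset_card_of_nodup hnd, hlen]
  have hLeq : (greedyList c b i).toFinset = c.filter (· < 2 * i) := by
    refine Finset.eq_of_subset_of_card_le hLsub ?_
    rw [hLcard, hfilt, hGcard]
  have h1L : (1 : ℕ) ∈ greedyList c b i := by
    rw [← List.mem_toFinset, hLeq]
    exact Finset.mem_filter.mpr ⟨h1c, by omega⟩
  obtain ⟨j, hj, hgpj⟩ := (mem_greedyList_iff c b i 1).mp h1L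
  constructor
  · refine ⟨b j, ?_, ?_, ?_⟩
    · rw [hbrow j (by omega)]
      have := T.row_lt (⟨j, by omega⟩ : Fin k)
      have := hent1 ((⟨j, by omega⟩ : Fin k), 0)
      omega
    · have := hmono j r.1 (by omega) r.2
      omega
    · exact Finset.mem_image.mpr ⟨j, Finset.mem_range.mpr (by omega), by rw [hgpj]⟩
  · intro hmem2k
    obtain ⟨m, hm, heq⟩ := Finset.mem_image.mp hmem2k
    rw [Finset.mem_range] at hm
    have heq' : (greedyPartner c b m, b m) = (1, 2 * k) := heq
    have hgpm : greedyPartner c b m = 1 := congrArg Prod.fst heq'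
    have hbm : b m = 2 * k := congrArg Prod.snd heq' 
    have hbk1 : b (k - 1) ≤ 2 * k := by
      rw [hbrow (k - 1) (by omega)]
      exact hent2 _
    have hmk : m = k - 1 := by
      by_contra hne
      have := hstrict m (k - 1) (by omega) (by omega)
      omega
    have hjm : j < m := by omega
    have h1Lm : (1 : ℕ) ∈ greedyList c b m := by
      rw [mem_greedyList_iff]
      exact ⟨j, hjm, hgpj⟩
    obtain ⟨-, -, -, hnotmem⟩ := greedy_inv c b k hmono hcard (m + 1) (by omega)
    have := hnotmem (by omega)
    simp only [Nat.add_sub_cancel] at this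
    rw [hgpm] at this
    exact this h1Lm
end

section
/- Let T be a standard Young tableau of shape (2,...,2) with k rows such that b_i ≠ 2i for all i ∈ [k-1]. Then {1, 2k} is an edge of the associated noncrossing matching M_T. -/
-- auxiliary lemmas

lemma greedyList_succ_s9 (c : Finset ℕ) (b : ℕ → ℕ) (i : ℕ) :
    greedyList c b (i+1) =
      greedyList c b i ++ [(c.filter fun a => a < b i ∧ a ∉ greedyList c b i).sup id] := rfl

lemma greedyPartner_eq (c : Finset ℕ) (b : ℕ → ℕ) (i : ℕ) :
    greedyPartner c b i = (c.filter fun a => a < b i ∧ a ∉ greedyList c b i).sup id := by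
  rw [greedyPartner, greedyList_succ_s9]; simp

namespace SYT2
variable {k : ℕ} (T : SYT2 k)

lemma entry_image : Finset.univ.image T.entry = Finset.Icc 1 (2*k) := by
  apply Finset.eq_of_subset_of_card_le
  · intro x hx
    simp only [Finset.mem_image, Finset.mem_univ, true_and] at hx
    obtain ⟨a, ha⟩ := hx
    exact ha ▸ T.mem_Icc a
  · rw [Finset.card_image_of_injective _ T.inj, Nat.card_Icc]
    simp; omega

lemma exists_entry {v : ℕ} (hv : v ∈ Finset.Icc 1 (2*k)) : ∃ x, T.entry x = v := by
  rw [← entry_image T, Finset.mem_image] at hv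
  obtain ⟨x, _, hx⟩ := hv
  exact ⟨x, hx⟩

lemma entry_le_row1 (r : Fin k) (c : Fin 2) : T.entry (r, c) ≤ T.entry (r, 1) := by
  fin_cases c
  · exact (T.row_lt r).le
  · exact le_rfl

lemma row0_le_entry (r : Fin k) (c : Fin 2) : T.entry (r, 0) ≤ T.entry (r, c) := by
  fin_cases c
  · exact le_rfl
  · exact (T.row_lt r).le

lemma entry_le_last (hk : 1 ≤ k) (x : Fin k × Fin 2) :
    T.entry x ≤ T.entry (⟨k-1, by omega⟩, 1) := by
  obtain ⟨r, c⟩ := x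
  refine (entry_le_row1 T r c).trans ?_
  rcases eq_or_lt_of_le (show r ≤ (⟨k-1, by omega⟩ : Fin k) by
    rw [Fin.le_def]; exact Nat.le_sub_one_of_lt r.2) with he | hl
  · rw [he]
  · exact (T.col_lt _ _ _ hl).le

lemma first_le_entry (hk : 1 ≤ k) (x : Fin k × Fin 2) :
    T.entry (⟨0, by omega⟩, 0) ≤ T.entry x := by
  obtain ⟨r, c⟩ := x
  refine le_trans ?_ (row0_le_entry T r c)
  rcases eq_or_lt_of_le (show (⟨0, by omega⟩ : Fin k) ≤ r by
    rw [Fin.le_def]; exact Nat.zero_le _) with he | hl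
  · rw [he]
  · exact (T.col_lt _ _ _ hl).le

lemma entry_first (hk : 1 ≤ k) : T.entry (⟨0, by omega⟩, 0) = 1 := by
  obtain ⟨x, hx⟩ := exists_entry T (v := 1) (by rw [Finset.mem_Icc]; omega)
  have h1 := first_le_entry T hk x
  have h2 := (Finset.mem_Icc.mp (T.mem_Icc (⟨0, by omega⟩, 0))).1
  omega

lemma entry_last_eq (hk : 1 ≤ k) : T.entry (⟨k-1, by omega⟩, 1) = 2*k := by
  obtain ⟨x, hx⟩ := exists_entry T (v := 2*k) (by rw [Finset.mem_Icc]; omega)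
  have h1 := entry_le_last T hk x
  have h2 := (Finset.mem_Icc.mp (T.mem_Icc (⟨k-1, by omega⟩, 1))).2
  omega

lemma one_mem_col1 (hk : 1 ≤ k) : 1 ∈ col1 T := by
  rw [col1, Finset.mem_image]
  exact ⟨⟨0, by omega⟩, Finset.mem_univ _, entry_first T hk⟩

lemma col_disjoint : Disjoint (col1 T) (col2 T) := by
  rw [Finset.disjoint_left]
  rintro a ha hb
  rw [col1, Finset.mem_image] at ha
  rw [col2, Finset.mem_image] at hb
  obtain ⟨r, _, hr⟩ := ha
  obtain ⟨r', _, hr'⟩ := hb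
  have := T.inj (hr.trans hr'.symm)
  have h2 := congrArg Prod.snd this
  simp at h2

lemma col_union : col1 T ∪ col2 T = Finset.Icc 1 (2*k) := by
  rw [← entry_image T]
  ext a
  simp only [Finset.mem_union, col1, col2, Finset.mem_image, Finset.mem_univ, true_and]
  constructor
  · rintro (⟨r, hr⟩ | ⟨r, hr⟩)
    exacts [⟨(r, 0), hr⟩, ⟨(r, 1), hr⟩]
  · rintro ⟨⟨r, c⟩, hr⟩
    fin_cases c
    exacts [Or.inl ⟨r, hr⟩, Or.inr ⟨r, hr⟩]

lemma bseq_eq (i : ℕ) (hik : i < k) : bseq T i = T.entry (⟨i, hik⟩, 1) := dif_pos hik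

lemma bseq_lt_bseq {i j : ℕ} (hij : i < j) (hj : j < k) : bseq T i < bseq T j := by
  rw [bseq_eq T i (by omega), bseq_eq T j hj]
  exact T.col_lt _ _ _ (by rw [Fin.lt_def]; exact hij)

lemma one_lt_bseq (i : ℕ) (hik : i < k) : 1 < bseq T i := by
  rw [bseq_eq T i hik]
  have h1 := first_le_entry T (by omega) (⟨i, hik⟩, 0)
  have h2 := T.row_lt ⟨i, hik⟩
  rw [entry_first T (by omega)] at h1
  omega

lemma count_lemma (i : ℕ) (hik : i < k) :
    ((col1 T).filter (· < bseq T i)).card + (i+1) = bseq T i := by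
  set b := bseq T i with hbdef
  have hb : b = T.entry (⟨i, hik⟩, 1) := bseq_eq T i hik
  have hbIcc := Finset.mem_Icc.mp (T.mem_Icc (⟨i, hik⟩, 1))
  have hIccf : ((Finset.Icc 1 (2*k)).filter (· < b)).card = b - 1 := by
    rw [show (Finset.Icc 1 (2*k)).filter (· < b) = Finset.Ico 1 b by
      ext a; simp only [Finset.mem_filter, Finset.mem_Icc, Finset.mem_Ico]; omega]
    rw [Nat.card_Ico]
  have hcol2f : ((col2 T).filter (· < b)).card = i := by
    have heq : (col2 T).filter (· < b) =
        (Finset.univ.filter fun r : Fin k => r.1 < i).image fun r => T.entry (r, 1) := by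
      ext a
      simp only [col2, Finset.mem_filter, Finset.mem_image, Finset.mem_univ, true_and]
      constructor
      · rintro ⟨⟨r, rfl⟩, hlt⟩
        refine ⟨r, ?_, rfl⟩
        by_contra hc
        push_neg at hc
        have hle : T.entry (⟨i, hik⟩, 1) ≤ T.entry (r, 1) := by
          rcases eq_or_lt_of_le (show (⟨i, hik⟩ : Fin k) ≤ r by rw [Fin.le_def]; exact hc)
            with he | hl
          · rw [he]
          · exact (T.col_lt _ _ _ hl).le
        omega
      · rintro ⟨r, hr, rfl⟩
        refine ⟨⟨r, rfl⟩, ?_⟩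
        rw [hb]
        exact T.col_lt _ _ _ (by rw [Fin.lt_def]; exact hr)
    rw [heq, Finset.card_image_of_injective _
      (fun a b hab => by simpa using congrArg Prod.fst (T.inj hab))]
    rw [show (Finset.univ.filter fun r : Fin k => r.1 < i) = Finset.Iio (⟨i, hik⟩ : Fin k) by
      ext r; simp [Fin.lt_def]]
    simp
  have hdisj : Disjoint ((col1 T).filter (· < b)) ((col2 T).filter (· < b)) :=
    Finset.disjoint_filter_filter (col_disjoint T)
  have hunion : ((col1 T).filter (· < b)).card + ((col2 T).filter (· < b)).card = b - 1 := by
    rw [← Finset.card_union_of_disjoint hdisj, ← Finset.filter_union, col_union T]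
    exact hIccf
  omega

end SYT2


/-- If `b_i ≠ 2i` for all `i ∈ [k-1]` (encoded by row indices `r = i - 1 : Fin k`),
then `{1, 2k}` is an edge of the associated noncrossing matching `M_T`. -/
theorem one_matched_to_top (k : ℕ) (hk : 1 ≤ k) (T : SYT2 k)
    (h : ∀ r : Fin k, r.1 + 1 < k → T.entry (r, 1) ≠ 2 * (r.1 + 1)) :
    (1, 2 * k) ∈ MT T := by
  classical
  set c := col1 T with hc
  set b := bseq T with hbdef
  -- the key S-analysis, shared by the induction step and the final step
  have keyS : ∀ i, i < k →
      (greedyList c b i).Nodup → (greedyList c b i).length = i →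
      (∀ x ∈ greedyList c b i, x ∈ c ∧ 1 < x ∧ x < b i) →
      (1 ∈ (c.filter fun a => a < b i ∧ a ∉ greedyList c b i) ∧
       (c.filter fun a => a < b i ∧ a ∉ greedyList c b i).card + (2*i+1) = b i) := by
    intro i hik hnd hlen hmem
    set l := greedyList c b i with hl
    set S := c.filter fun a => a < b i ∧ a ∉ l with hS
    have h1S : (1:ℕ) ∈ S := by
      rw [hS, Finset.mem_filter]
      refine ⟨T.one_mem_col1 hk, T.one_lt_bseq i hik, fun hmem1 => ?_⟩
      exact absurd (hmem 1 hmem1).2.1 (lt_irrefl 1)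
    have hsub : l.toFinset ⊆ c.filter (· < b i) := by
      intro x hx
      rw [List.mem_toFinset] at hx
      obtain ⟨h1, _, h3⟩ := hmem x hx
      exact Finset.mem_filter.mpr ⟨h1, h3⟩
    have hlcard : l.toFinset.card = i := by
      rw [List.card_toFinset, hnd.dedup, hlen]
    have hSeq : S = (c.filter (· < b i)) \ l.toFinset := by
      ext a
      simp only [hS, Finset.mem_filter, Finset.mem_sdiff, List.mem_toFinset]
      tauto
    have hle := Finset.card_le_card hsub
    have hScard : S.card + i = (c.filter (· < b i)).card := by
      rw [hSeq, Finset.card_sdiff_of_subset hsub, hlcard]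
      omega
    have hcount := T.count_lemma i hik
    rw [← hc, ← hbdef] at hcount
    exact ⟨h1S, by omega⟩
  have key : ∀ i, i < k →
      (greedyList c b i).Nodup ∧ (greedyList c b i).length = i ∧
      ∀ x ∈ greedyList c b i, x ∈ c ∧ 1 < x ∧ x < b i := by
    intro i
    induction i with
    | zero => intro _; simp [greedyList]
    | succ i ih =>
      intro hik
      obtain ⟨hnd, hlen, hmem⟩ := ih (by omega)
      obtain ⟨h1S, hScard⟩ := keyS i (by omega) hnd hlen hmem
      set l := greedyList c b i with hl
      set S := c.filter fun a => a < b i ∧ a ∉ l with hS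
      have hbne : b i ≠ 2*(i+1) := by
        have hh := h ⟨i, by omega⟩ (by simpa using hik)
        rw [hbdef, T.bseq_eq i (by omega)]
        exact hh
      have hS1 : 1 ≤ S.card := Finset.card_pos.mpr ⟨1, h1S⟩
      have hS2 : 2 ≤ S.card := by omega
      set m := S.sup id with hm
      have hmS : m ∈ S := by
        obtain ⟨x, hx, he⟩ := Finset.exists_mem_eq_sup S ⟨1, h1S⟩ id
        simp only [id] at he
        rw [hm, he]
        exact hx
      obtain ⟨hmc, hmlt, hmnl⟩ := Finset.mem_filter.mp hmS
      have hm1 : 1 < m := by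
        have hgen : ∀ z ∈ S, z ≠ 1 → 1 < m := by
          intro z hz hz1
          have hzc : z ∈ col1 T := (Finset.mem_filter.mp hz).1
          have hzI : z ∈ Finset.Icc 1 (2*k) := by
            rw [← T.col_union]; exact Finset.mem_union_left _ hzc
          have h1z : 1 ≤ z := (Finset.mem_Icc.mp hzI).1
          have h1z' : 1 < z := lt_of_le_of_ne h1z (Ne.symm hz1)
          exact lt_of_lt_of_le h1z' (Finset.le_sup (f := id) hz)
        obtain ⟨x, hx, y, hy, hxy⟩ := Finset.one_lt_card.mp hS2
        rcases eq_or_ne x 1 with rfl | hx1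
        · exact hgen y hy (fun hy1 => hxy hy1.symm)
        · exact hgen x hx hx1
      have hbi : b i < b (i+1) := by
        rw [hbdef]; exact T.bseq_lt_bseq (Nat.lt_succ_self i) hik
      rw [greedyList_succ_s9, ← hl, ← hS, ← hm]
      refine ⟨?_, ?_, ?_⟩
      · rw [List.nodup_append]
        exact ⟨hnd, List.nodup_singleton m, by
          intro x hx y hy hxy
          rw [List.mem_singleton] at hy
          subst hy; subst hxy
          exact hmnl hx⟩
      · simp [hlen]
      · intro x hx
        rw [List.mem_append, List.mem_singleton] at hx
        rcases hx with hx | rfl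
        · obtain ⟨ha, hb1, hb2⟩ := hmem x hx
          exact ⟨ha, hb1, hb2.trans hbi⟩
        · exact ⟨hmc, hm1, hmlt.trans hbi⟩
  -- final step
  have hk1 : k - 1 < k := by omega
  obtain ⟨hnd, hlen, hmem⟩ := key (k-1) hk1
  obtain ⟨h1S, hScard⟩ := keyS (k-1) hk1 hnd hlen hmem
  have hblast : b (k-1) = 2*k := by
    rw [hbdef, T.bseq_eq (k-1) hk1, T.entry_last_eq hk]
  set S := c.filter fun a => a < b (k-1) ∧ a ∉ greedyList c b (k-1) with hS
  have hScard1 : S.card = 1 := by omega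
  have hSsingle : S = {1} := by
    obtain ⟨a, ha⟩ := Finset.card_eq_one.mp hScard1
    rw [ha] at h1S ⊢
    rw [Finset.mem_singleton] at h1S
    rw [h1S]
  have hpartner : greedyPartner c b (k-1) = 1 := by
    rw [greedyPartner_eq, ← hS, hSsingle]
    simp
  rw [MT, Finset.mem_image]
  refine ⟨k-1, Finset.mem_range.mpr hk1, ?_⟩
  rw [← hc, ← hbdef, hpartner, hblast]
end
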